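/- Let H be an N×N Hermitian complex matrix, let u, v ∈ ℂ^N be orthonormal vectors, and let k₁, ε ∈ ℂ satisfy |k₁|² + |ε|² = 1 and |ε| ≤ |k₁|. Set ψ = k₁·u + ε·v. Then |k₁|²·( ⟨u, H²u⟩ − (⟨u, Hu⟩)² ) ≥ ( ⟨ψ, H²ψ⟩ − (⟨ψ, Hψ⟩)² ) − 11·|ε|·‖H‖². -/

import Mathlib

open scoped Matrix.Norms.L2Operator
open scoped Matrix

lemma cs_key {N : ℕ} (M : Matrix (Fin N) (Fin N) ℂ) (x y : Fin N → ℂ)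
    (hx : star x ⬝ᵥ x = 1) (hy : star y ⬝ᵥ y = 1) :
    ‖(star x ⬝ᵥ (M *ᵥ y))‖ ≤ ‖M‖ := by
  set x' : EuclideanSpace ℂ (Fin N) := (WithLp.equiv 2 _).symm x with hx'
  set y' : EuclideanSpace ℂ (Fin N) := (WithLp.equiv 2 _).symm y with hy'
  have hnx : ‖x'‖ = 1 := by
    have h1 : (inner ℂ x' x' : ℂ) = 1 := by
      rw [hx', WithLp.equiv_symm_apply, EuclideanSpace.inner_toLp_toLp, dotProduct_comm]; exact hx
    have h2 : (inner ℂ x' x' : ℂ) = (‖x'‖ : ℂ) ^ 2 := inner_self_eq_norm_sq_to_K x'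
    have : (‖x'‖ : ℝ) ^ 2 = 1 := by
      have := h1.symm.trans h2
      exact_mod_cast this.symm
    nlinarith [norm_nonneg x']
  have hny : ‖y'‖ = 1 := by
    have h1 : (inner ℂ y' y' : ℂ) = 1 := by
      rw [hy', WithLp.equiv_symm_apply, EuclideanSpace.inner_toLp_toLp, dotProduct_comm]; exact hy
    have h2 : (inner ℂ y' y' : ℂ) = (‖y'‖ : ℂ) ^ 2 := inner_self_eq_norm_sq_to_K y'
    have : (‖y'‖ : ℝ) ^ 2 = 1 := by
      have := h1.symm.trans h2
      exact_mod_cast this.symm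
    nlinarith [norm_nonneg y']
  have h1 : (star x ⬝ᵥ (M *ᵥ y)) = inner ℂ x' ((WithLp.equiv 2 _).symm (M *ᵥ y) : EuclideanSpace ℂ (Fin N)) := by
    rw [hx', WithLp.equiv_symm_apply, EuclideanSpace.inner_toLp_toLp, dotProduct_comm]
  have h2 : ‖((WithLp.equiv 2 _).symm (M *ᵥ y) : EuclideanSpace ℂ (Fin N))‖ ≤ ‖M‖ * ‖y'‖ :=
    M.l2_opNorm_mulVec y'
  calc ‖(star x ⬝ᵥ (M *ᵥ y))‖ = ‖(inner ℂ x' ((WithLp.equiv 2 _).symm (M *ᵥ y) : EuclideanSpace ℂ (Fin N)) : ℂ)‖ := by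
        rw [h1]
    _ ≤ ‖x'‖ * ‖((WithLp.equiv 2 _).symm (M *ᵥ y) : EuclideanSpace ℂ (Fin N))‖ := norm_inner_le_norm _ _
    _ ≤ ‖M‖ := by rw [hnx, one_mul]; simpa [hny] using h2

lemma expand_key {N : ℕ} (M : Matrix (Fin N) (Fin N) ℂ) (u v : Fin N → ℂ) (k₁ ε : ℂ) :
    star (k₁ • u + ε • v) ⬝ᵥ (M *ᵥ (k₁ • u + ε • v)) =
      (starRingEnd ℂ k₁ * k₁) * (star u ⬝ᵥ (M *ᵥ u)) +
      ((starRingEnd ℂ k₁ * ε) * (star u ⬝ᵥ (M *ᵥ v)) +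
       (starRingEnd ℂ ε * k₁) * (star v ⬝ᵥ (M *ᵥ u)) +
       (starRingEnd ℂ ε * ε) * (star v ⬝ᵥ (M *ᵥ v))) := by
  simp only [star_add, star_smul, Matrix.mulVec_add, Matrix.mulVec_smul,
    add_dotProduct, smul_dotProduct, dotProduct_add,
    dotProduct_smul, smul_eq_mul, RCLike.star_def]
  ring

lemma re_expand {N : ℕ} (M : Matrix (Fin N) (Fin N) ℂ) (u v : Fin N → ℂ) (k₁ ε : ℂ) :
    (star (k₁ • u + ε • v) ⬝ᵥ (M *ᵥ (k₁ • u + ε • v))).re =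
      (‖k₁‖)^2 * (star u ⬝ᵥ (M *ᵥ u)).re +
      ((starRingEnd ℂ k₁ * ε) * (star u ⬝ᵥ (M *ᵥ v)) +
       (starRingEnd ℂ ε * k₁) * (star v ⬝ᵥ (M *ᵥ u)) +
       (starRingEnd ℂ ε * ε) * (star v ⬝ᵥ (M *ᵥ v))).re := by
  rw [expand_key, Complex.add_re]
  congr 1
  have h : starRingEnd ℂ k₁ * k₁ = ((‖k₁‖ : ℝ)^2 : ℂ) := by
    rw [mul_comm, Complex.mul_conj, Complex.normSq_eq_norm_sq]
    push_cast; ring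
  rw [h]; rw [show ((‖k₁‖ : ℂ)^2) = ((‖k₁‖ ^2 : ℝ) : ℂ) by push_cast; ring,
    Complex.re_ofReal_mul]

lemma rem_bound {N : ℕ} (M : Matrix (Fin N) (Fin N) ℂ) (u v : Fin N → ℂ)
    (hu : star u ⬝ᵥ u = 1) (hv : star v ⬝ᵥ v = 1) (k₁ ε : ℂ)
    (hc : ‖k₁‖ ≤ 1) (he : ‖ε‖ ≤ 1) :
    |((starRingEnd ℂ k₁ * ε) * (star u ⬝ᵥ (M *ᵥ v)) +
      (starRingEnd ℂ ε * k₁) * (star v ⬝ᵥ (M *ᵥ u)) +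
      (starRingEnd ℂ ε * ε) * (star v ⬝ᵥ (M *ᵥ v))).re| ≤ 3 * ‖ε‖ * ‖M‖ := by
  have h1 := cs_key M u v hu hv
  have h2 := cs_key M v u hv hu
  have h3 := cs_key M v v hv hv
  have ha1 := norm_nonneg (star u ⬝ᵥ (M *ᵥ v))
  have ha2 := norm_nonneg (star v ⬝ᵥ (M *ᵥ u))
  have ha3 := norm_nonneg (star v ⬝ᵥ (M *ᵥ v))
  have he0 : 0 ≤ ‖ε‖ := norm_nonneg ε
  have hc0 : 0 ≤ ‖k₁‖ := norm_nonneg k₁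
  have hM0 : 0 ≤ ‖M‖ := norm_nonneg M
  calc |((starRingEnd ℂ k₁ * ε) * (star u ⬝ᵥ (M *ᵥ v)) +
      (starRingEnd ℂ ε * k₁) * (star v ⬝ᵥ (M *ᵥ u)) +
      (starRingEnd ℂ ε * ε) * (star v ⬝ᵥ (M *ᵥ v))).re|
      ≤ ‖((starRingEnd ℂ k₁ * ε) * (star u ⬝ᵥ (M *ᵥ v)) +
      (starRingEnd ℂ ε * k₁) * (star v ⬝ᵥ (M *ᵥ u)) +
      (starRingEnd ℂ ε * ε) * (star v ⬝ᵥ (M *ᵥ v)))‖ := Complex.abs_re_le_norm _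
    _ ≤ ‖((starRingEnd ℂ k₁ * ε) * (star u ⬝ᵥ (M *ᵥ v)))‖ +
        ‖((starRingEnd ℂ ε * k₁) * (star v ⬝ᵥ (M *ᵥ u)))‖ +
        ‖((starRingEnd ℂ ε * ε) * (star v ⬝ᵥ (M *ᵥ v)))‖ := by
        refine (norm_add_le _ _).trans ?_
        gcongr
        exact norm_add_le _ _
    _ = ‖k₁‖ * ‖ε‖ * ‖(star u ⬝ᵥ (M *ᵥ v))‖ +
        ‖ε‖ * ‖k₁‖ * ‖(star v ⬝ᵥ (M *ᵥ u))‖ +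
        ‖ε‖ * ‖ε‖ * ‖(star v ⬝ᵥ (M *ᵥ v))‖ := by
        simp [norm_mul, Complex.norm_conj]
    _ ≤ 3 * ‖ε‖ * ‖M‖ := by
        nlinarith [mul_nonneg he0 (sub_nonneg.2 h1), mul_nonneg he0 (sub_nonneg.2 h2),
          mul_nonneg he0 (sub_nonneg.2 h3),
          mul_nonneg (mul_nonneg he0 ha1) (sub_nonneg.2 hc),
          mul_nonneg (mul_nonneg he0 ha2) (sub_nonneg.2 hc),
          mul_nonneg (mul_nonneg he0 ha3) (sub_nonneg.2 he)]

lemma final_ineq (a b c e n R1 R2 : ℝ) (hc0 : 0 ≤ c) (he0 : 0 ≤ e) (hn : 0 ≤ n)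
    (hce : c^2 + e^2 = 1) (he1 : e ≤ 1) (hc1 : c ≤ 1)
    (hb : |b| ≤ n) (hR1 : |R1| ≤ 3*e*n) (hR2 : |R2| ≤ 3*e*n^2) :
    c^2*(a - b^2) ≥ (c^2*a + R2) - (c^2*b + R1)^2 - 11*e*n^2 := by
  rw [abs_le] at hb hR1 hR2
  have h1e : 1 - c^2 = e^2 := by linarith
  have hbb : b^2 ≤ n^2 := by nlinarith [hb.1, hb.2]
  have t1 : e^2*(c^2*b^2) ≤ e*n^2 := by
    nlinarith [sq_nonneg b, sq_nonneg e, sq_nonneg c, sq_nonneg (e*b), sq_nonneg (e*c*b),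
      mul_nonneg (mul_nonneg he0 he0) (sub_nonneg.2 hbb),
      mul_nonneg (mul_nonneg he0 (sq_nonneg n)) (sub_nonneg.2 he1),
      mul_nonneg (sq_nonneg (e*b)) (sub_nonneg.2 (by nlinarith : c^2 ≤ 1))]
  have hbR1 : -(3*e*n^2) ≤ b*R1 := by
    nlinarith [mul_nonneg (sub_nonneg.2 hb.2) (sub_nonneg.2 hR1.2),
      mul_nonneg (sub_nonneg.2 (neg_le.1 hb.1)) (sub_nonneg.2 (neg_le.1 hR1.1))]
  have t2 : -(2*c^2*(b*R1)) ≤ 6*e*n^2 := by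
    nlinarith [mul_nonneg (sq_nonneg c) (by linarith : 0 ≤ 3*e*n^2 + b*R1),
      mul_nonneg (sub_nonneg.2 (by nlinarith : c^2 ≤ 1)) (mul_nonneg he0 (sq_nonneg n))]
  have key : (c^2*a + R2) - (c^2*b + R1)^2 - 11*e*n^2 - c^2*(a - b^2)
      = R2 + (1 - c^2)*(c^2*b^2) - 2*c^2*(b*R1) - R1^2 - 11*e*n^2 := by ring
  have : R2 + (1 - c^2)*(c^2*b^2) - 2*c^2*(b*R1) - R1^2 - 11*e*n^2 ≤ 0 := by
    rw [h1e]
    nlinarith [sq_nonneg R1, mul_nonneg he0 (sq_nonneg n)]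
  linarith

/-- For a Hermitian matrix `H`, orthonormal vectors `u, v`, and
`ψ = k₁·u + ε·v` with `|k₁|² + |ε|² = 1` and `|ε| ≤ |k₁|`:
`|k₁|²·Var_u(H) ≥ Var_ψ(H) − 11|ε|·‖H‖²`, where
`Var_x(H) = ⟨x, H²x⟩ − ⟨x, Hx⟩²`. -/
theorem stmt18 {N : ℕ} (H : Matrix (Fin N) (Fin N) ℂ) (hH : H.IsHermitian)
    (u v : Fin N → ℂ)
    (hu : star u ⬝ᵥ u = 1) (hv : star v ⬝ᵥ v = 1) (huv : star u ⬝ᵥ v = 0)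
    (k₁ ε : ℂ) (hnorm : ‖k₁‖ ^ 2 + ‖ε‖ ^ 2 = 1)
    (hle : ‖ε‖ ≤ ‖k₁‖)
    (ψ : Fin N → ℂ) (hψ : ψ = k₁ • u + ε • v) :
    (‖k₁‖) ^ 2 *
        ((star u ⬝ᵥ ((H * H) *ᵥ u)).re - ((star u ⬝ᵥ (H *ᵥ u)).re) ^ 2) ≥
      ((star ψ ⬝ᵥ ((H * H) *ᵥ ψ)).re - ((star ψ ⬝ᵥ (H *ᵥ ψ)).re) ^ 2) -
        11 * ‖ε‖ * ‖H‖ ^ 2 := by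
  subst hψ
  have he0 : 0 ≤ ‖ε‖ := norm_nonneg ε
  have hc0 : 0 ≤ ‖k₁‖ := norm_nonneg k₁
  have hc1 : ‖k₁‖ ≤ 1 := by nlinarith
  have he1 : ‖ε‖ ≤ 1 := by nlinarith
  have hM0 : 0 ≤ ‖H‖ := norm_nonneg H
  have hex2 := re_expand (H*H) u v k₁ ε
  have hex1 := re_expand H u v k₁ ε
  have hR2 : |((starRingEnd ℂ k₁ * ε) * (star u ⬝ᵥ ((H*H) *ᵥ v)) +
      (starRingEnd ℂ ε * k₁) * (star v ⬝ᵥ ((H*H) *ᵥ u)) +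
      (starRingEnd ℂ ε * ε) * (star v ⬝ᵥ ((H*H) *ᵥ v))).re| ≤ 3 * ‖ε‖ * ‖H * H‖ :=
    rem_bound (H*H) u v hu hv k₁ ε hc1 he1
  have hR1 : |((starRingEnd ℂ k₁ * ε) * (star u ⬝ᵥ (H *ᵥ v)) +
      (starRingEnd ℂ ε * k₁) * (star v ⬝ᵥ (H *ᵥ u)) +
      (starRingEnd ℂ ε * ε) * (star v ⬝ᵥ (H *ᵥ v))).re| ≤ 3 * ‖ε‖ * ‖H‖ :=
    rem_bound H u v hu hv k₁ ε hc1 he1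
  have hHH : ‖H * H‖ ≤ ‖H‖ * ‖H‖ := Matrix.l2_opNorm_mul H H
  have hR2' : |((starRingEnd ℂ k₁ * ε) * (star u ⬝ᵥ ((H*H) *ᵥ v)) +
      (starRingEnd ℂ ε * k₁) * (star v ⬝ᵥ ((H*H) *ᵥ u)) +
      (starRingEnd ℂ ε * ε) * (star v ⬝ᵥ ((H*H) *ᵥ v))).re| ≤ 3 * ‖ε‖ * ‖H‖^2 := by
    refine hR2.trans ?_
    have : ‖H‖^2 = ‖H‖ * ‖H‖ := sq ‖H‖
    rw [this]
    nlinarith [mul_nonneg he0 (norm_nonneg (H*H))]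
  have hb : |(star u ⬝ᵥ (H *ᵥ u)).re| ≤ ‖H‖ :=
    (Complex.abs_re_le_norm _).trans (cs_key H u u hu hu)
  rw [hex2, hex1]
  have := final_ineq ((star u ⬝ᵥ ((H*H) *ᵥ u)).re) ((star u ⬝ᵥ (H *ᵥ u)).re)
    (‖k₁‖) (‖ε‖) ‖H‖ _ _ hc0 he0 hM0 hnorm he1 hc1 hb hR1 hR2'
  linarith
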